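/- Let G be a finite group and N a normal subgroup of G with |G : N| = p for some prime p. Then M'_{G,N} = − Σ_{C ≤ N, C cyclic} (1 − χ(T_C(G)))·φ(|C|), where the sum is over all cyclic subgroups C of N. -/

import Mathlib

noncomputable instance subgroupFintype (G : Type*) [Group G] [Finite G] :
    Fintype (Subgroup G) :=
  Fintype.ofFinite _

open Classical in
/-- The Möbius function of the lattice of subgroups of `G`, ordered by inclusion. -/
noncomputable def subgroupMu (G : Type*) [Group G] [Finite G] (X Y : Subgroup G) : ℤ :=
  letI : LocallyFiniteOrder (Subgroup G) := Fintype.toLocallyFiniteOrder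
  IncidenceAlgebra.mu ℤ X Y

open Classical in
/-- `Mprime G Y M = Σ_{X ≤ M} |X| · μ(X, Y)`.  In particular `Mprime G ⊤ N` is the
quantity `M'_{G,N} = Σ_{X ≤ N} |X| · μ(X, G)` of the paper. -/
noncomputable def Mprime (G : Type*) [Group G] [Finite G] (Y M : Subgroup G) : ℤ :=
  ∑ X : Subgroup G, if X ≤ M then (Nat.card X : ℤ) * subgroupMu G X Y else 0

/-- The poset `T_C(G)` of all subgroups `X` of `G` with `C ≤ X`, `X` a proper subgroup
of `G`, and `X` not contained in `N`, ordered by inclusion. -/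
def TCposet (G : Type*) [Group G] (N C : Subgroup G) : Set (Subgroup G) :=
  {X | C ≤ X ∧ X < ⊤ ∧ ¬ X ≤ N}

/-- `chainCount G N C i` is the number `c_i` of strictly increasing chains
`X_0 < X_1 < ⋯ < X_i` of elements of `T_C(G)`. -/
noncomputable def chainCount (G : Type*) [Group G] [Finite G] (N C : Subgroup G) (i : ℕ) : ℕ :=
  Nat.card {s : LTSeries (TCposet G N C) // s.length = i}

/-- The Euler characteristic `χ(T_C(G)) = Σ_{i ≥ 0} (-1)^i c_i` of (the geometric
realization of the nerve of) the poset `T_C(G)`. -/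
noncomputable def eulerCharTC (G : Type*) [Group G] [Finite G] (N C : Subgroup G) : ℤ :=
  ∑ᶠ i : ℕ, (-1 : ℤ) ^ i * chainCount G N C i

/-! ### Auxiliary material -/

set_option linter.unusedSectionVars false

/-- A length-`l` `LTSeries` is the same thing as a strictly monotone map `Fin (l+1) → α`. -/
def ltSeriesEquiv (α : Type*) [Preorder α] (l : ℕ) :
    {s : LTSeries α // s.length = l} ≃ {f : Fin (l + 1) → α // StrictMono f} where
  toFun s := ⟨fun i => s.1.toFun (Fin.cast (by rw [s.2]) i),
    fun i j hij => s.1.strictMono (by rwa [Fin.lt_def, Fin.coe_cast, Fin.coe_cast, ← Fin.lt_def])⟩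
  invFun f := ⟨⟨l, f.1, fun i => f.2 (Fin.castSucc_lt_succ (i := i))⟩, rfl⟩
  left_inv := by
    rintro ⟨s, rfl⟩
    simp only [Subtype.mk.injEq]
    exact RelSeries.ext rfl (by ext i; rfl)
  right_inv := by
    rintro ⟨f, hf⟩
    rfl

section
variable {G : Type*} [Group G] [Finite G]

/-- Number of chains of length `l` in `T_C(G)` whose head is `x`. -/
noncomputable def hc (N C : Subgroup G) (x : Subgroup G) (l : ℕ) : ℕ :=
  Nat.card {f : Fin (l + 1) → (TCposet G N C) // StrictMono f ∧ ((f 0 : Subgroup G)) = x}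

lemma card_eq_sum_fibers {α : Type*} [Finite α] (p : α → Prop) (F : α → Subgroup G) :
    Nat.card {a // p a} = ∑ x : Subgroup G, Nat.card {a // p a ∧ F a = x} := by
  classical
  rw [Nat.card_congr (Equiv.sigmaFiberEquiv (fun q : {a // p a} => F q.1)).symm]
  haveI : Fintype {a // p a} := Fintype.ofFinite _
  rw [Nat.card_eq_fintype_card, Fintype.card_sigma]
  refine Finset.sum_congr rfl fun x _ => ?_
  rw [← Nat.card_eq_fintype_card]
  exact Nat.card_congr (Equiv.subtypeSubtypeEquivSubtypeInter p (fun a => F a = x))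

open Classical in
lemma chainCount_eq (N C : Subgroup G) (l : ℕ) :
    chainCount G N C l = ∑ x : Subgroup G, if x ∈ TCposet G N C then hc N C x l else 0 := by
  rw [chainCount, Nat.card_congr (ltSeriesEquiv _ l),
    card_eq_sum_fibers (fun f : Fin (l+1) → (TCposet G N C) => StrictMono f)
      (fun f => (f 0 : Subgroup G))]
  refine Finset.sum_congr rfl fun x _ => ?_
  split_ifs with hx
  · rfl
  · haveI : IsEmpty {f : Fin (l+1) → (TCposet G N C) // StrictMono f ∧ ((f 0 : Subgroup G)) = x} :=
      ⟨fun f => hx (f.2.2 ▸ (f.1 0).2)⟩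
    exact Nat.card_of_isEmpty

lemma hc_zero (N C x : Subgroup G) (hx : x ∈ TCposet G N C) : hc N C x 0 = 1 := by
  rw [hc, Nat.card_eq_one_iff_unique]
  haveI : Subsingleton (Fin (0 + 1)) := inferInstanceAs (Subsingleton (Fin 1))
  refine ⟨⟨fun a b => ?_⟩, ⟨⟨fun _ => ⟨x, hx⟩, Subsingleton.strictMono _, rfl⟩⟩⟩
  apply Subtype.ext
  funext i
  have hi : i = 0 := Subsingleton.elim i 0
  subst hi
  exact Subtype.ext (a.2.2.trans b.2.2.symm)

lemma hc_big (N C x : Subgroup G) (l : ℕ) (hl : Nat.card (TCposet G N C) ≤ l) :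
    hc N C x l = 0 := by
  have : IsEmpty {f : Fin (l + 1) → (TCposet G N C) // StrictMono f ∧ ((f 0 : Subgroup G)) = x} := by
    constructor
    rintro ⟨f, hf, -⟩
    have h1 := Nat.card_le_card_of_injective f hf.injective
    rw [Nat.card_eq_fintype_card (α := Fin (l+1)), Fintype.card_fin] at h1
    omega
  rw [hc, Nat.card_of_isEmpty]

lemma chainCount_big (N C : Subgroup G) (l : ℕ) (hl : Nat.card (TCposet G N C) ≤ l) :
    chainCount G N C l = 0 := by
  classical
  rw [chainCount_eq]
  exact Finset.sum_eq_zero fun x _ => by rw [hc_big N C x l hl, ite_self]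

def consEquiv (N C x : Subgroup G) (hx : x ∈ TCposet G N C) (l : ℕ) :
    {f : Fin (l + 2) → (TCposet G N C) // StrictMono f ∧ ((f 0 : Subgroup G)) = x} ≃
      {g : Fin (l + 1) → (TCposet G N C) // StrictMono g ∧ x < (g 0 : Subgroup G)} where
  toFun f := ⟨fun i => f.1 i.succ, by
    constructor
    · exact fun i j hij => f.2.1 (by simpa using hij)
    · have h1 : f.1 0 < f.1 (Fin.succ 0) := f.2.1 (by simp [Fin.lt_def])
      calc x = ((f.1 0 : Subgroup G)) := f.2.2.symm
        _ < _ := h1⟩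
  invFun g := ⟨Fin.cases ⟨x, hx⟩ g.1, by
    refine ⟨?_, rfl⟩
    rw [Fin.strictMono_iff_lt_succ]
    intro i
    induction i using Fin.cases with
    | zero =>
      rw [Fin.castSucc_zero]
      rw [show (Fin.cases (motive := fun _ => (TCposet G N C)) ⟨x, hx⟩ g.1 (Fin.succ 0)) = g.1 0
        from Fin.cases_succ _]
      rw [Fin.cases_zero]
      exact Subtype.mk_lt_mk.mpr g.2.2
    | succ j =>
      have harg : Fin.castSucc (Fin.succ j) = Fin.succ (Fin.castSucc j) := rfl
      rw [harg, Fin.cases_succ, Fin.cases_succ]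
      exact g.2.1 (Fin.castSucc_lt_succ (i := j))⟩
  left_inv := by
    rintro ⟨f, hf, h0⟩
    simp only [Subtype.mk.injEq]
    funext i
    induction i using Fin.cases with
    | zero => rw [Fin.cases_zero]; exact (Subtype.ext h0).symm
    | succ j => rw [Fin.cases_succ]
  right_inv := by
    rintro ⟨g, hg⟩
    simp only [Subtype.mk.injEq]
    funext i
    rw [Fin.cases_succ]

open Classical in
lemma hc_succ (N C x : Subgroup G) (hx : x ∈ TCposet G N C) (l : ℕ) :
    hc N C x (l + 1) =
      ∑ y : Subgroup G, if y ∈ TCposet G N C ∧ x < y then hc N C y l else 0 := by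
  rw [hc, Nat.card_congr (consEquiv N C x hx l),
    card_eq_sum_fibers (fun g : Fin (l+1) → (TCposet G N C) => StrictMono g ∧ x < (g 0 : Subgroup G))
      (fun g => (g 0 : Subgroup G))]
  refine Finset.sum_congr rfl fun y _ => ?_
  split_ifs with hy
  · refine Nat.card_congr (Equiv.subtypeEquivRight fun g => ?_)
    constructor
    · rintro ⟨⟨hg, -⟩, h0⟩; exact ⟨hg, h0⟩
    · rintro ⟨hg, h0⟩; exact ⟨⟨hg, h0 ▸ hy.2⟩, h0⟩
  · haveI : IsEmpty {g : Fin (l+1) → (TCposet G N C) //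
        (StrictMono g ∧ x < (g 0 : Subgroup G)) ∧ (g 0 : Subgroup G) = y} := by
      refine ⟨fun g => hy ?_⟩
      obtain ⟨⟨hg, hlt⟩, h0⟩ := g.2
      exact ⟨h0 ▸ (g.1 0).2, h0 ▸ hlt⟩
    exact Nat.card_of_isEmpty

/-! ### The Möbius function side -/

lemma zpowers_isCyclic (g : G) : IsCyclic (Subgroup.zpowers g) := by
  refine ⟨⟨⟨g, Subgroup.mem_zpowers g⟩, ?_⟩⟩
  rintro ⟨y, k, rfl⟩
  exact ⟨k, Subtype.ext (by push_cast [SubgroupClass.coe_zpow]; rfl)⟩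

lemma zpowers_coe_eq_iff (C : Subgroup G) (g : G) (hg : g ∈ C) :
    Subgroup.zpowers (⟨g, hg⟩ : C) = ⊤ ↔ Subgroup.zpowers g = C := by
  constructor
  · intro h
    have := congrArg (Subgroup.map C.subtype) h
    rwa [MonoidHom.map_zpowers, show C.subtype ⟨g, hg⟩ = g from rfl,
      ← MonoidHom.range_eq_map, Subgroup.range_subtype] at this
  · intro h
    apply Subgroup.map_injective (Subgroup.subtype_injective C)
    rw [MonoidHom.map_zpowers, show C.subtype ⟨g, hg⟩ = g from rfl,
      ← MonoidHom.range_eq_map, Subgroup.range_subtype]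
    exact h

lemma card_generators (C : Subgroup G) (hC : IsCyclic C) :
    Nat.card {g : G // Subgroup.zpowers g = C} = Nat.totient (Nat.card C) := by
  classical
  haveI : Fintype C := Fintype.ofFinite _
  have e : {g : G // Subgroup.zpowers g = C} ≃ {c : C // orderOf c = Nat.card C} := by
    have hmem : ∀ g : {g : G // Subgroup.zpowers g = C}, g.1 ∈ C := fun g =>
      Subgroup.zpowers_le.mp (le_of_eq g.2)
    refine ⟨fun g => ⟨⟨g.1, hmem g⟩, ?_⟩,
      fun c => ⟨c.1.1, ?_⟩, fun g => rfl, fun c => rfl⟩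
    · have h2 : Subgroup.zpowers (⟨g.1, hmem g⟩ : C) = ⊤ :=
        (zpowers_coe_eq_iff C g.1 _).mpr g.2
      rw [← Nat.card_zpowers, h2, Subgroup.card_top]
    · rw [← zpowers_coe_eq_iff C c.1.1 c.1.2]
      apply Subgroup.eq_top_of_card_eq
      rw [Nat.card_zpowers]
      exact c.2
  rw [Nat.card_congr e]
  have h := IsCyclic.card_orderOf_eq_totient (α := C) (d := Fintype.card C) dvd_rfl
  rw [Nat.card_eq_fintype_card, Nat.card_eq_fintype_card, Fintype.card_subtype]
  convert h using 2

open Classical in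
lemma subgroup_card_eq_sum_totient (X : Subgroup G) :
    (Nat.card X) = ∑ C : Subgroup G,
      if C ≤ X ∧ IsCyclic C then Nat.totient (Nat.card C) else 0 := by
  have h0 : Nat.card X = Nat.card {g : G // g ∈ X} := rfl
  rw [h0, card_eq_sum_fibers (fun g : G => g ∈ X) (fun g => Subgroup.zpowers g)]
  refine Finset.sum_congr rfl fun C _ => ?_
  split_ifs with hC
  · rw [← card_generators C hC.2]
    refine Nat.card_congr (Equiv.subtypeEquivRight fun g => ?_)
    constructor
    · rintro ⟨-, h⟩; exact h
    · intro h; exact ⟨hC.1 (h ▸ Subgroup.mem_zpowers g), h⟩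
  · haveI : IsEmpty {g : G // g ∈ X ∧ Subgroup.zpowers g = C} := by
      refine ⟨fun g => hC ?_⟩
      obtain ⟨hgX, hz⟩ := g.2
      exact ⟨hz ▸ Subgroup.zpowers_le.mpr hgX, hz ▸ zpowers_isCyclic g.1⟩
    exact Nat.card_of_isEmpty

open Classical in
lemma subgroupMu_sum_left (a b : Subgroup G) :
    ∑ x : Subgroup G, (if a ≤ x ∧ x ≤ b then subgroupMu G x b else 0) =
      if a = b then 1 else 0 := by
  letI : LocallyFiniteOrder (Subgroup G) := Fintype.toLocallyFiniteOrder
  have h := IncidenceAlgebra.sum_Icc_mu_left (𝕜 := ℤ) a b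
  rw [← h]
  have hIcc : Finset.Icc a b = Finset.univ.filter (fun x => a ≤ x ∧ x ≤ b) := by
    ext x
    simp [Finset.mem_Icc]
  rw [hIcc, Finset.sum_filter]
  exact Finset.sum_congr rfl fun x _ => by split_ifs <;> rfl

lemma subgroupMu_self (a : Subgroup G) : subgroupMu G a a = 1 := by
  classical
  letI : LocallyFiniteOrder (Subgroup G) := Fintype.toLocallyFiniteOrder
  exact IncidenceAlgebra.mu_self (𝕜 := ℤ) a

/-! ### Hall's chain formula, adapted to `T_C(G)` -/

open Classical in
lemma hall_formula (N C : Subgroup G) :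
    ∀ x : Subgroup G, x ∈ TCposet G N C →
      ∑ l ∈ Finset.range (Nat.card (TCposet G N C) + 1), (-1 : ℤ) ^ l * hc N C x l
        = - subgroupMu G x ⊤ := by
  have wf : WellFounded ((· > ·) : Subgroup G → Subgroup G → Prop) :=
    (Finite.to_wellFoundedGT).wf
  intro x
  induction x using wf.induction with
  | _ x IH =>
  intro hx
  set K₀ := Nat.card (TCposet G N C) with hK₀
  rw [Finset.sum_range_succ']
  have h00 : ((-1 : ℤ)) ^ 0 * hc N C x 0 = 1 := by
    rw [hc_zero N C x hx]; simp
  rw [h00]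
  have hstep : ∀ l ∈ Finset.range K₀, (-1 : ℤ) ^ (l + 1) * hc N C x (l + 1)
      = - ∑ y : Subgroup G,
          (if y ∈ TCposet G N C ∧ x < y then (-1 : ℤ) ^ l * hc N C y l else 0) := by
    intro l _
    rw [hc_succ N C x hx l]
    push_cast
    rw [Finset.mul_sum, pow_succ]
    rw [← Finset.sum_neg_distrib]
    refine Finset.sum_congr rfl fun y _ => ?_
    split_ifs <;> push_cast <;> ring
  rw [Finset.sum_congr rfl hstep, Finset.sum_neg_distrib, Finset.sum_comm]
  have hinner : ∀ y : Subgroup G,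
      ∑ l ∈ Finset.range K₀, (if y ∈ TCposet G N C ∧ x < y then (-1 : ℤ) ^ l * hc N C y l else 0)
        = if y ∈ TCposet G N C ∧ x < y then - subgroupMu G y ⊤ else 0 := by
    intro y
    split_ifs with hy
    · rw [← IH y hy.2 hy.1]
      rw [Finset.sum_range_succ]
      rw [hc_big N C y K₀ le_rfl]
      simp
    · simp
  rw [Finset.sum_congr rfl fun y _ => hinner y]
  have hneg : ∑ y : Subgroup G, (if y ∈ TCposet G N C ∧ x < y then - subgroupMu G y ⊤ else 0)
      = - ∑ y : Subgroup G, (if y ∈ TCposet G N C ∧ x < y then subgroupMu G y ⊤ else 0) := by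
    rw [← Finset.sum_neg_distrib]
    exact Finset.sum_congr rfl fun y _ => by split_ifs <;> simp
  rw [hneg]
  -- now use the defining property of mu
  have hxt : x ≠ ⊤ := ne_of_lt hx.2.1
  have hsum := subgroupMu_sum_left (G := G) x ⊤
  rw [if_neg hxt] at hsum
  have hsplit : ∀ z : Subgroup G,
      (if x ≤ z ∧ z ≤ ⊤ then subgroupMu G z ⊤ else 0)
        = (if z = x then subgroupMu G z ⊤ else 0) + (if z = ⊤ then subgroupMu G z ⊤ else 0)
          + (if z ∈ TCposet G N C ∧ x < z then subgroupMu G z ⊤ else 0) := by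
    intro z
    by_cases h1 : z = x
    · subst h1
      rw [if_pos ⟨le_rfl, le_top⟩, if_pos rfl, if_neg (fun h => hxt h), if_neg (by
        rintro ⟨-, hlt⟩; exact lt_irrefl z hlt)]
      ring
    · by_cases h2 : z = ⊤
      · subst h2
        rw [if_pos ⟨le_top, le_rfl⟩, if_neg h1, if_pos rfl, if_neg (by
          rintro ⟨⟨-, hlt, -⟩, -⟩; exact lt_irrefl ⊤ hlt)]
        ring
      · by_cases h3 : x ≤ z
        · have hxz : x < z := lt_of_le_of_ne h3 (Ne.symm h1)
          have hzP : z ∈ TCposet G N C := by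
            refine ⟨hx.1.trans h3, lt_top_iff_ne_top.mpr h2, fun hzN => hx.2.2 (h3.trans hzN)⟩
          rw [if_pos ⟨h3, le_top⟩, if_neg h1, if_neg h2, if_pos ⟨hzP, hxz⟩]
          ring
        · rw [if_neg (fun h => h3 h.1), if_neg h1, if_neg h2, if_neg (by
            rintro ⟨-, hlt⟩; exact h3 (le_of_lt hlt))]
          ring
  rw [Finset.sum_congr rfl fun z _ => hsplit z] at hsum
  rw [Finset.sum_add_distrib, Finset.sum_add_distrib] at hsum
  rw [Fintype.sum_ite_eq' x (fun z => subgroupMu G z ⊤),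
    Fintype.sum_ite_eq' ⊤ (fun z => subgroupMu G z ⊤), subgroupMu_self] at hsum
  linarith [hsum]

open Classical in
lemma eulerCharTC_eq (N C : Subgroup G) :
    eulerCharTC G N C = ∑ l ∈ Finset.range (Nat.card (TCposet G N C) + 1),
      (-1 : ℤ) ^ l * chainCount G N C l := by
  rw [eulerCharTC]
  apply finsum_eq_sum_of_support_subset
  intro l hl
  simp only [Function.mem_support, ne_eq] at hl
  by_contra hmem
  simp only [Finset.coe_range, Set.mem_Iio, not_lt] at hmem
  exact hl (by rw [chainCount_big N C l (by omega)]; simp)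

open Classical in
lemma sum_mu_TC (N C : Subgroup G) :
    ∑ x : Subgroup G, (if x ∈ TCposet G N C then subgroupMu G x ⊤ else 0)
      = - eulerCharTC G N C := by
  have h1 : eulerCharTC G N C = ∑ x : Subgroup G,
      (if x ∈ TCposet G N C then
        ∑ l ∈ Finset.range (Nat.card (TCposet G N C) + 1), (-1 : ℤ) ^ l * hc N C x l
      else 0) := by
    rw [eulerCharTC_eq]
    have hexp : ∀ l ∈ Finset.range (Nat.card (TCposet G N C) + 1),
        (-1 : ℤ) ^ l * chainCount G N C l
          = ∑ x : Subgroup G, (if x ∈ TCposet G N C then (-1 : ℤ) ^ l * hc N C x l else 0) := by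
      intro l _
      have hcc : (chainCount G N C l : ℤ)
          = ∑ x : Subgroup G, (if x ∈ TCposet G N C then (hc N C x l : ℤ) else 0) := by
        have := chainCount_eq N C l
        push_cast [this]
        rfl
      rw [hcc, Finset.mul_sum]
      refine Finset.sum_congr rfl fun x _ => ?_
      split_ifs <;> ring
    rw [Finset.sum_congr rfl hexp, Finset.sum_comm]
    refine Finset.sum_congr rfl fun x _ => ?_
    by_cases hx : x ∈ TCposet G N C <;> simp [hx]
  have h2 : ∀ x : Subgroup G,
      (if x ∈ TCposet G N C then
        ∑ l ∈ Finset.range (Nat.card (TCposet G N C) + 1), (-1 : ℤ) ^ l * hc N C x l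
      else 0) = (if x ∈ TCposet G N C then - subgroupMu G x ⊤ else 0) := by
    intro x
    by_cases hx : x ∈ TCposet G N C
    · rw [if_pos hx, if_pos hx, hall_formula N C x hx]
    · simp [hx]
  rw [h1, Finset.sum_congr rfl fun x _ => h2 x]
  have h3 : ∑ x : Subgroup G, (if x ∈ TCposet G N C then - subgroupMu G x ⊤ else 0)
      = - ∑ x : Subgroup G, (if x ∈ TCposet G N C then subgroupMu G x ⊤ else 0) := by
    rw [← Finset.sum_neg_distrib]
    exact Finset.sum_congr rfl fun x _ => by split_ifs <;> simp
  rw [h3, neg_neg]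

open Classical in
lemma sum_mu_Iic (N C : Subgroup G) (hN : ¬ (⊤ : Subgroup G) ≤ N) (hC : C ≤ N) :
    ∑ x : Subgroup G, (if C ≤ x ∧ x ≤ N then subgroupMu G x ⊤ else 0)
      = eulerCharTC G N C - 1 := by
  have hCt : C ≠ ⊤ := fun h => hN (h ▸ hC)
  have hsum := subgroupMu_sum_left (G := G) C ⊤
  rw [if_neg hCt] at hsum
  have hsplit : ∀ z : Subgroup G,
      (if C ≤ z ∧ z ≤ ⊤ then subgroupMu G z ⊤ else 0)
        = (if C ≤ z ∧ z ≤ N then subgroupMu G z ⊤ else 0)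
          + (if z = ⊤ then subgroupMu G z ⊤ else 0)
          + (if z ∈ TCposet G N C then subgroupMu G z ⊤ else 0) := by
    intro z
    by_cases hz1 : z ≤ N
    · have hz2 : z ≠ ⊤ := fun h => hN (h ▸ hz1)
      have hz3 : z ∉ TCposet G N C := fun h => h.2.2 hz1
      by_cases hz4 : C ≤ z
      · rw [if_pos ⟨hz4, le_top⟩, if_pos ⟨hz4, hz1⟩, if_neg hz2, if_neg hz3]; ring
      · rw [if_neg (fun h => hz4 h.1), if_neg (fun h => hz4 h.1), if_neg hz2,
          if_neg (fun h => hz4 h.1)]; ring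
    · by_cases hz2 : z = ⊤
      · subst hz2
        rw [if_pos ⟨le_top, le_rfl⟩, if_neg (fun h => hz1 h.2), if_pos rfl,
          if_neg (fun h => lt_irrefl ⊤ h.2.1)]; ring
      · have hzt : z < ⊤ := lt_top_iff_ne_top.mpr hz2
        by_cases hz4 : C ≤ z
        · rw [if_pos ⟨hz4, le_top⟩, if_neg (fun h => hz1 h.2), if_neg hz2,
            if_pos ⟨hz4, hzt, hz1⟩]; ring
        · rw [if_neg (fun h => hz4 h.1), if_neg (fun h => hz4 h.1), if_neg hz2,
            if_neg (fun h => hz4 h.1)]; ring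
  rw [Finset.sum_congr rfl fun z _ => hsplit z, Finset.sum_add_distrib,
    Finset.sum_add_distrib, Fintype.sum_ite_eq' ⊤ (fun z => subgroupMu G z ⊤),
    subgroupMu_self, sum_mu_TC N C] at hsum
  linear_combination hsum

end

open Classical in
/-- If `N ⊴ G` has prime index `p`, then
`M'_{G,N} = − Σ_{C ≤ N, C cyclic} (1 − χ(T_C(G)))·φ(|C|)`. -/
theorem stmt9 (G : Type*) [Group G] [Finite G] (N : Subgroup G) (hN : N.Normal)
    (p : ℕ) (hp : p.Prime) (hidx : N.index = p) :
    Mprime G ⊤ N =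
      - ∑ C : Subgroup G, if C ≤ N ∧ IsCyclic ↥C then
          (1 - eulerCharTC G N C) * (Nat.totient (Nat.card C) : ℤ)
        else 0 := by
  classical
  have hN' : ¬ (⊤ : Subgroup G) ≤ N := by
    intro h
    have hNt : N = ⊤ := top_le_iff.mp h
    rw [hNt, Subgroup.index_top] at hidx
    exact hp.ne_one hidx.symm
  rw [Mprime]
  have hL : ∀ X : Subgroup G, (if X ≤ N then (Nat.card X : ℤ) * subgroupMu G X ⊤ else 0)
      = ∑ C : Subgroup G, (if C ≤ X ∧ X ≤ N ∧ IsCyclic C then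
          (Nat.totient (Nat.card C) : ℤ) * subgroupMu G X ⊤ else 0) := by
    intro X
    by_cases hX : X ≤ N
    · rw [if_pos hX]
      have hcard : (Nat.card X : ℤ) = ∑ C : Subgroup G,
          (if C ≤ X ∧ IsCyclic C then (Nat.totient (Nat.card C) : ℤ) else 0) := by
        have := subgroup_card_eq_sum_totient X
        push_cast [this]
        rfl
      rw [hcard, Finset.sum_mul]
      refine Finset.sum_congr rfl fun Cc _ => ?_
      by_cases h : Cc ≤ X ∧ IsCyclic Cc
      · rw [if_pos h, if_pos ⟨h.1, hX, h.2⟩]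
      · rw [if_neg h, if_neg (by rintro ⟨a, b, c⟩; exact h ⟨a, c⟩), zero_mul]
    · rw [if_neg hX]
      symm
      exact Finset.sum_eq_zero fun Cc _ =>
        by rw [if_neg (by rintro ⟨-, hXN, -⟩; exact hX hXN)]
  rw [Finset.sum_congr rfl fun X _ => hL X, Finset.sum_comm]
  have hR : ∀ Cc : Subgroup G,
      (∑ X : Subgroup G, if Cc ≤ X ∧ X ≤ N ∧ IsCyclic Cc then
        (Nat.totient (Nat.card Cc) : ℤ) * subgroupMu G X ⊤ else 0)
      = (if Cc ≤ N ∧ IsCyclic Cc then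
          (eulerCharTC G N Cc - 1) * (Nat.totient (Nat.card Cc) : ℤ) else 0) := by
    intro Cc
    by_cases hcyc : IsCyclic Cc
    · by_cases hCN : Cc ≤ N
      · rw [if_pos ⟨hCN, hcyc⟩]
        have hI := sum_mu_Iic N Cc hN' hCN
        have : (∑ X : Subgroup G, if Cc ≤ X ∧ X ≤ N ∧ IsCyclic Cc then
            (Nat.totient (Nat.card Cc) : ℤ) * subgroupMu G X ⊤ else 0)
            = (Nat.totient (Nat.card Cc) : ℤ) *
              ∑ X : Subgroup G, (if Cc ≤ X ∧ X ≤ N then subgroupMu G X ⊤ else 0) := by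
          rw [Finset.mul_sum]
          refine Finset.sum_congr rfl fun X _ => ?_
          by_cases h : Cc ≤ X ∧ X ≤ N
          · rw [if_pos ⟨h.1, h.2, hcyc⟩, if_pos h]
          · rw [if_neg (by rintro ⟨a, b, -⟩; exact h ⟨a, b⟩), if_neg h, mul_zero]
        rw [this, hI]
        ring
      · rw [if_neg (fun h => hCN h.1)]
        exact Finset.sum_eq_zero fun X _ =>
          by rw [if_neg (by rintro ⟨h1, h2, -⟩; exact hCN (h1.trans h2))]
    · rw [if_neg (fun h => hcyc h.2)]
      exact Finset.sum_eq_zero fun X _ => by rw [if_neg (fun h => hcyc h.2.2)]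
  rw [Finset.sum_congr rfl fun Cc _ => hR Cc, ← Finset.sum_neg_distrib]
  refine Finset.sum_congr rfl fun Cc _ => ?_
  split_ifs <;> ring
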